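/- arXiv:2206.07623 — 2 statements merged into one kernel-verified Lean document; each statement's English description precedes it below -/
import Mathlib

section
/- Suppose there exist a matrix P with ZᵀP = PᵀZ ⪰ 0, scalars ε > 0, γ > 0, and a symmetric matrix inequality [[Υ, PᵀF, Pᵀ B̃],[FᵀP, −εI, 0],[B̃ᵀP, 0, −γI]] ≺ 0 where Υ = A_cᵀP + PᵀA_c + εGᵀG + ΓᵀΓ. Then for every e, Δf, w with Δfᵀ Δf ≤ eᵀ GᵀG e, the dissipation inequality 2 eᵀ Pᵀ(A_c e + F Δf + B̃ w) + eᵀ ΓᵀΓ e − γ wᵀ w < 0 holds whenever (e, Δf, w) ≠ 0. -/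
open Matrix

private lemma dp_swap {k l : ℕ} (A : Matrix (Fin k) (Fin l) ℝ) (u : Fin l → ℝ) (v : Fin k → ℝ) :
    u ⬝ᵥ Aᵀ *ᵥ v = v ⬝ᵥ A *ᵥ u := by
  rw [dotProduct_mulVec, vecMul_transpose, dotProduct_comm]

/-- Feasibility of the LMI
`[[Υ, PᵀF, PᵀB̃],[FᵀP, −εI, 0],[B̃ᵀP, 0, −γI]] ≺ 0` with
`Υ = A_cᵀP + PᵀA_c + εGᵀG + ΓᵀΓ` implies the strict dissipation inequality
for every nonzero `(e, Δf, w)` satisfying the Lipschitz quadratic constraint. -/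
theorem stmt5 (n m q : ℕ)
    (Z P Ac G Γ : Matrix (Fin n) (Fin n) ℝ)
    (F : Matrix (Fin n) (Fin m) ℝ) (Bt : Matrix (Fin n) (Fin q) ℝ)
    (hsym : Zᵀ * P = Pᵀ * Z) (hpsd : (Zᵀ * P).PosSemidef)
    (ε γ : ℝ) (hε : 0 < ε) (hγ : 0 < γ)
    (Υ : Matrix (Fin n) (Fin n) ℝ)
    (hΥ : Υ = Acᵀ * P + Pᵀ * Ac + ε • (Gᵀ * G) + Γᵀ * Γ)
    (M : Matrix ((Fin n ⊕ Fin m) ⊕ Fin q) ((Fin n ⊕ Fin m) ⊕ Fin q) ℝ)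
    (hM : M = Matrix.fromBlocks
      (Matrix.fromBlocks Υ (Pᵀ * F) (Fᵀ * P) (-(ε • (1 : Matrix (Fin m) (Fin m) ℝ))))
      (Matrix.fromRows (Pᵀ * Bt) (0 : Matrix (Fin m) (Fin q) ℝ))
      (Matrix.fromCols (Btᵀ * P) (0 : Matrix (Fin q) (Fin m) ℝ))
      (-(γ • (1 : Matrix (Fin q) (Fin q) ℝ))))
    (hneg : (-M).PosDef) :
    ∀ (e : Fin n → ℝ) (Δf : Fin m → ℝ) (w : Fin q → ℝ),
      Δf ⬝ᵥ Δf ≤ e ⬝ᵥ ((Gᵀ * G) *ᵥ e) →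
      (e ≠ 0 ∨ Δf ≠ 0 ∨ w ≠ 0) →
      2 * (e ⬝ᵥ (Pᵀ *ᵥ (Ac *ᵥ e + F *ᵥ Δf + Bt *ᵥ w)))
        + e ⬝ᵥ ((Γᵀ * Γ) *ᵥ e) - γ * (w ⬝ᵥ w) < 0 := by
  intro e Δf w hlip hne
  set x : ((Fin n ⊕ Fin m) ⊕ Fin q) → ℝ := Sum.elim (Sum.elim e Δf) w with hx
  have hxne : x ≠ 0 := by
    intro h
    have he : e = 0 := funext fun i => congrFun h (Sum.inl (Sum.inl i))
    have hf : Δf = 0 := funext fun i => congrFun h (Sum.inl (Sum.inr i))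
    have hw : w = 0 := funext fun i => congrFun h (Sum.inr i)
    rcases hne with h'|h'|h' <;> exact h' (by assumption)
  have key := hneg.dotProduct_mulVec_pos hxne
  have hM' : x ⬝ᵥ ((-M) *ᵥ x) = -(x ⬝ᵥ (M *ᵥ x)) := by
    simp [neg_mulVec, dotProduct_neg]
  simp only [star_trivial] at key
  rw [hM', hx] at key
  subst hM hΥ
  simp only [fromBlocks_mulVec, fromRows_mulVec, Sum.elim_comp_inl, Sum.elim_comp_inr,
    fromCols_mulVec_sumElim, sumElim_dotProduct_sumElim, zero_mulVec, mulVec_zero,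
    dotProduct_zero, add_zero, zero_add, neg_mulVec, smul_mulVec, one_mulVec,
    dotProduct_neg, dotProduct_smul, add_mulVec, mulVec_add, dotProduct_add,
    ← mulVec_mulVec, smul_eq_mul] at key hlip ⊢
  have h1 : e ⬝ᵥ Acᵀ *ᵥ (P *ᵥ e) = e ⬝ᵥ Pᵀ *ᵥ (Ac *ᵥ e) := by
    rw [dp_swap, dp_swap, dotProduct_comm]
  have h2 : Δf ⬝ᵥ Fᵀ *ᵥ (P *ᵥ e) = e ⬝ᵥ Pᵀ *ᵥ (F *ᵥ Δf) := by
    rw [dp_swap, dp_swap, dotProduct_comm]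
  have h3 : w ⬝ᵥ Btᵀ *ᵥ (P *ᵥ e) = e ⬝ᵥ Pᵀ *ᵥ (Bt *ᵥ w) := by
    rw [dp_swap, dp_swap, dotProduct_comm]
  nlinarith [key, hlip, hε.le, h1, h2, h3, mul_nonneg hε.le (sub_nonneg.2 hlip)]
end

section
/- Given invertible matrices M, N with MZN = diag(I, 0) and a matrix P with ZᵀP = PᵀZ ⪰ 0, the matrix P admits a decomposition P = XZ + Z^{⊥T}Y with X = Mᵀ diag(P₁, I) M symmetric positive semidefinite (positive definite if P₁ ≻ 0), Z^{⊥T} = Mᵀ[0; I], and Y = [P₃ P₄]N⁻¹, where [[P₁, 0],[P₃, P₄]] = M^{−T} P N and P₁ is symmetric. -/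
open Matrix

private lemma psd_congr {n : Type*} [Fintype n] {A : Matrix n n ℝ} (M : Matrix n n ℝ)
    (hA : A.PosSemidef) : (Mᵀ * A * M).PosSemidef := by
  have := hA.conjTranspose_mul_mul_same M
  rwa [conjTranspose_eq_transpose_of_trivial] at this

private lemma mulVec_ne_zero {n : Type*} [Fintype n] [DecidableEq n] (M : Matrix n n ℝ)
    [Invertible M] {x : n → ℝ} (hx : x ≠ 0) : M *ᵥ x ≠ 0 := by
  intro h
  apply hx
  have : ⅟M *ᵥ (M *ᵥ x) = x := by rw [mulVec_mulVec, invOf_mul_self, one_mulVec]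
  rw [h, mulVec_zero] at this
  exact this.symm

private lemma posdef_congr {n : Type*} [Fintype n] [DecidableEq n] {A : Matrix n n ℝ}
    (M : Matrix n n ℝ) [Invertible M] (hA : A.PosDef) : (Mᵀ * A * M).PosDef := by
  refine Matrix.PosDef.of_dotProduct_mulVec_pos ?_ ?_
  · have := isHermitian_conjTranspose_mul_mul M hA.1
    rwa [conjTranspose_eq_transpose_of_trivial] at this
  · intro x hx
    have h1 : (Mᵀ * A * M) *ᵥ x = Mᵀ *ᵥ (A *ᵥ (M *ᵥ x)) := by
      rw [← mulVec_mulVec, ← mulVec_mulVec]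
    have h2 : star x ⬝ᵥ (Mᵀ * A * M) *ᵥ x = star (M *ᵥ x) ⬝ᵥ A *ᵥ (M *ᵥ x) := by
      rw [h1, dotProduct_mulVec, vecMul_transpose]
      simp [star_trivial]
    rw [h2]
    exact hA.dotProduct_mulVec_pos (mulVec_ne_zero M hx)

private lemma psd_fromBlocks_diag {m n : Type*} [Fintype m] [Fintype n]
    {A : Matrix m m ℝ} {D : Matrix n n ℝ} (hA : A.PosSemidef) (hD : D.PosSemidef) :
    (fromBlocks A 0 0 D).PosSemidef := by
  refine Matrix.PosSemidef.of_dotProduct_mulVec_nonneg ?_ ?_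
  · have h1 := hA.1; have h2 := hD.1
    rw [IsHermitian, fromBlocks_conjTranspose] at *
    rw [conjTranspose_eq_transpose_of_trivial] at h1 h2
    simp [h1, h2]
  · intro x
    rw [← Sum.elim_comp_inl_inr x, fromBlocks_mulVec]
    simp only [zero_mulVec, add_zero, zero_add, star_trivial]
    rw [sumElim_dotProduct_sumElim]
    simp only [Sum.elim_comp_inl, Sum.elim_comp_inr]
    have := hA.dotProduct_mulVec_nonneg (x ∘ Sum.inl)
    have := hD.dotProduct_mulVec_nonneg (x ∘ Sum.inr)
    simp only [star_trivial] at *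
    positivity

private lemma posdef_fromBlocks_diag {m n : Type*} [Fintype m] [Fintype n]
    {A : Matrix m m ℝ} {D : Matrix n n ℝ} (hA : A.PosDef) (hD : D.PosDef) :
    (fromBlocks A 0 0 D).PosDef := by
  refine Matrix.PosDef.of_dotProduct_mulVec_pos ?_ ?_
  · have h1 := hA.1; have h2 := hD.1
    rw [IsHermitian, fromBlocks_conjTranspose] at *
    rw [conjTranspose_eq_transpose_of_trivial] at h1 h2
    simp [h1, h2]
  · intro x hx
    rw [← Sum.elim_comp_inl_inr x, fromBlocks_mulVec]
    simp only [zero_mulVec, add_zero, zero_add, star_trivial]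
    rw [sumElim_dotProduct_sumElim]
    simp only [Sum.elim_comp_inl, Sum.elim_comp_inr]
    have hcase : x ∘ Sum.inl ≠ 0 ∨ x ∘ Sum.inr ≠ 0 := by
      by_contra h
      push_neg at h
      apply hx
      funext i
      cases i with
      | inl i => exact congrFun h.1 i
      | inr i => exact congrFun h.2 i
    rcases hcase with h | h
    · have h1 := hA.dotProduct_mulVec_pos h
      have h2 := hD.posSemidef.dotProduct_mulVec_nonneg (x ∘ Sum.inr)
      simp only [star_trivial] at *
      linarith
    · have h1 := hA.posSemidef.dotProduct_mulVec_nonneg (x ∘ Sum.inl)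
      have h2 := hD.dotProduct_mulVec_pos h
      simp only [star_trivial] at *
      linarith

/-- Given invertible `M, N` with `M Z N = diag(I,0)` and `P` with
`ZᵀP = PᵀZ ⪰ 0`, writing `M⁻ᵀ P N = [[P₁, P₂],[P₃, P₄]]`, the matrix `P`
decomposes as `P = XZ + ZperpᵀY` with `X = Mᵀ diag(P₁, I) M` symmetric positive
semidefinite (positive definite if `P₁ ≻ 0`), `Zperpᵀ = Mᵀ[0;I]`,
`Y = [P₃ P₄]N⁻¹`, and moreover `P₂ = 0` and `P₁` is symmetric. -/
theorem stmt9 (nd na : ℕ)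
    (Z P M N : Matrix (Fin nd ⊕ Fin na) (Fin nd ⊕ Fin na) ℝ)
    [Invertible M] [Invertible N]
    (hMZN : M * Z * N = Matrix.fromBlocks 1 0 0 0)
    (hsym : Zᵀ * P = Pᵀ * Z) (hpsd : (Zᵀ * P).PosSemidef)
    (B : Matrix (Fin nd ⊕ Fin na) (Fin nd ⊕ Fin na) ℝ)
    (hB : B = (M⁻¹)ᵀ * P * N)
    (P₁ : Matrix (Fin nd) (Fin nd) ℝ) (hP₁ : P₁ = B.toBlocks₁₁)
    (X : Matrix (Fin nd ⊕ Fin na) (Fin nd ⊕ Fin na) ℝ)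
    (hX : X = Mᵀ * Matrix.fromBlocks P₁ 0 0 1 * M)
    (Zperp : Matrix (Fin nd ⊕ Fin na) (Fin na) ℝ)
    (hZperp : Zperp = Mᵀ * ((1 : Matrix (Fin nd ⊕ Fin na) (Fin nd ⊕ Fin na) ℝ).submatrix id Sum.inr))
    (Y : Matrix (Fin na) (Fin nd ⊕ Fin na) ℝ)
    (hY : Y = (B.submatrix Sum.inr id) * N⁻¹) :
    P = X * Z + Zperp * Y ∧ X.PosSemidef ∧ (P₁.PosDef → X.PosDef) ∧
      B.toBlocks₁₂ = 0 ∧ P₁.IsSymm := by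
  set E : Matrix (Fin nd ⊕ Fin na) (Fin nd ⊕ Fin na) ℝ := Matrix.fromBlocks 1 0 0 0 with hE
  have hMM : Mᵀ * (M⁻¹)ᵀ = 1 := by
    rw [← transpose_mul, Matrix.inv_mul_of_invertible, transpose_one]
  have hMM' : (M⁻¹)ᵀ * Mᵀ = 1 := by
    rw [← transpose_mul, Matrix.mul_inv_of_invertible, transpose_one]
  have hNN : N * N⁻¹ = 1 := Matrix.mul_inv_of_invertible N
  have hNN' : N⁻¹ * N = 1 := Matrix.inv_mul_of_invertible N
  have hNN'' : Nᵀ * (N⁻¹)ᵀ = 1 := by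
    rw [← transpose_mul, Matrix.inv_mul_of_invertible, transpose_one]
  have hP : P = Mᵀ * B * N⁻¹ := by
    rw [hB]
    have h : Mᵀ * ((M⁻¹)ᵀ * P * N) * N⁻¹ = Mᵀ * (M⁻¹)ᵀ * (P * (N * N⁻¹)) := by
      simp only [Matrix.mul_assoc]
    rw [h, hMM, hNN, Matrix.one_mul, Matrix.mul_one]
  have hZeq : Z = M⁻¹ * (E * N⁻¹) := by
    have h1 : M⁻¹ * (M * Z * N * N⁻¹) = M⁻¹ * (E * N⁻¹) := by rw [hMZN]
    have h2 : M⁻¹ * (M * Z * N * N⁻¹) = M⁻¹ * M * (Z * (N * N⁻¹)) := by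
      simp only [Matrix.mul_assoc]
    rw [← h1, h2, Matrix.inv_mul_of_invertible, hNN, Matrix.one_mul, Matrix.mul_one]
  have hEt : Eᵀ = E := by
    rw [hE, fromBlocks_transpose]; simp
  have hZPeq : Zᵀ * P = (N⁻¹)ᵀ * (E * B) * N⁻¹ := by
    rw [hZeq, hP]
    simp only [transpose_mul, hEt, Matrix.mul_assoc]
    rw [← Matrix.mul_assoc (M⁻¹)ᵀ Mᵀ, hMM', Matrix.one_mul]
  have hEBeq : E * B = Nᵀ * (Zᵀ * P) * N := by
    rw [hZPeq]
    have h : Nᵀ * ((N⁻¹)ᵀ * (E * B) * N⁻¹) * N = Nᵀ * (N⁻¹)ᵀ * (E * B * (N⁻¹ * N)) := by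
      simp only [Matrix.mul_assoc]
    rw [h, hNN'', hNN', Matrix.one_mul, Matrix.mul_one]
  have hEBpsd : (E * B).PosSemidef := by rw [hEBeq]; exact psd_congr N hpsd
  have hEBblocks : E * B = Matrix.fromBlocks B.toBlocks₁₁ B.toBlocks₁₂ 0 0 := by
    conv_lhs => rw [← fromBlocks_toBlocks B]
    rw [hE, fromBlocks_multiply]
    simp
  have hEBh : (E * B)ᵀ = E * B := by
    have := hEBpsd.1
    rwa [Matrix.IsHermitian, conjTranspose_eq_transpose_of_trivial] at this
  rw [hEBblocks, fromBlocks_transpose] at hEBh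
  have h12 : B.toBlocks₁₂ = 0 := by
    have := congrArg Matrix.toBlocks₁₂ hEBh
    simp only [toBlocks_fromBlocks₁₂] at this
    rw [← this, transpose_zero]
  have h11 : B.toBlocks₁₁ᵀ = B.toBlocks₁₁ := by
    have := congrArg Matrix.toBlocks₁₁ hEBh
    simpa only [toBlocks_fromBlocks₁₁] using this
  have hP₁eq : P₁ = (E * B).submatrix Sum.inl Sum.inl := by
    rw [hEBblocks, hP₁]
    ext i j
    simp [Matrix.toBlocks₁₁]
  have hP₁psd : P₁.PosSemidef := by rw [hP₁eq]; exact hEBpsd.submatrix Sum.inl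
  have hXpsd : X.PosSemidef := by
    rw [hX]
    exact psd_congr M (psd_fromBlocks_diag hP₁psd Matrix.PosDef.one.posSemidef)
  have hXpd : P₁.PosDef → X.PosDef := by
    intro h
    rw [hX]
    exact posdef_congr M (posdef_fromBlocks_diag h Matrix.PosDef.one)
  refine ⟨?_, hXpsd, hXpd, h12, by rw [Matrix.IsSymm, hP₁]; exact h11⟩
  have hXZ : X * Z = Mᵀ * Matrix.fromBlocks P₁ 0 0 0 * N⁻¹ := by
    rw [hX, hZeq]
    have h : Mᵀ * Matrix.fromBlocks P₁ 0 0 1 * M * (M⁻¹ * (E * N⁻¹)) =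
        Mᵀ * (Matrix.fromBlocks P₁ 0 0 1 * ((M * M⁻¹) * (E * N⁻¹))) := by
      simp only [Matrix.mul_assoc]
    rw [h, Matrix.mul_inv_of_invertible, Matrix.one_mul]
    have h2 : Matrix.fromBlocks P₁ 0 0 1 * E = Matrix.fromBlocks P₁ 0 0 0 := by
      rw [hE, fromBlocks_multiply]; simp
    rw [← Matrix.mul_assoc (Matrix.fromBlocks P₁ 0 0 1) E, h2, Matrix.mul_assoc]
  have hZY : Zperp * Y = Mᵀ * (((1 : Matrix (Fin nd ⊕ Fin na) (Fin nd ⊕ Fin na) ℝ).submatrix id Sum.inr) * (B.submatrix Sum.inr id)) * N⁻¹ := by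
    rw [hZperp, hY]
    simp only [Matrix.mul_assoc]
  rw [hXZ, hZY, hP, ← Matrix.add_mul, ← Matrix.mul_add]
  congr 1
  congr 1
  ext i j
  cases i with
  | inl i =>
    cases j with
    | inl j =>
      simp [Matrix.fromBlocks, Matrix.mul_apply, Matrix.one_apply, hP₁, Matrix.toBlocks₁₁]
    | inr j =>
      have := congrFun (congrFun h12 i) j
      simp only [Matrix.toBlocks₁₂, Matrix.of_apply, Matrix.zero_apply] at this
      simp [Matrix.fromBlocks, Matrix.mul_apply, Matrix.one_apply, this]
  | inr i =>
    cases j with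
    | inl j =>
      simp [Matrix.fromBlocks, Matrix.mul_apply, Matrix.one_apply]
    | inr j =>
      simp [Matrix.fromBlocks, Matrix.mul_apply, Matrix.one_apply]
end
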